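/- In the butterfly graph BF(d), the set X = (L_0 ∪ L_d) \ { [0, 11...1], [d, 11...1] }, consisting of all vertices at levels 0 and d except the two all-ones-column endpoints, is a mutual-visibility set of size 2^{d+1} - 2. -/

import Mathlib

open SimpleGraph

/-- Two vertices are `X`-visible in `G`: some shortest path between them has
no internal vertex in `X`. -/
def IsVisiblePair {V : Type*} (G : SimpleGraph V) (X : Set V) (x y : V) : Prop :=
  ∃ p : G.Walk x y, p.IsPath ∧ p.length = G.dist x y ∧
    ∀ z ∈ p.support, z ∈ X → z = x ∨ z = y

/-- `X` is a mutual-visibility set of `G`. -/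
def MutualVisSet {V : Type*} (G : SimpleGraph V) (X : Set V) : Prop :=
  ∀ x ∈ X, ∀ y ∈ X, IsVisiblePair G X x y

/-- `X` is a total mutual-visibility set of `G`. -/
def TotalMutualVisSet {V : Type*} (G : SimpleGraph V) (X : Set V) : Prop :=
  ∀ x y : V, IsVisiblePair G X x y

/-- The mutual-visibility number `μ(G)`. -/
noncomputable def mutualVisNum {V : Type*} (G : SimpleGraph V) : ℕ :=
  sSup {n | ∃ X : Set V, MutualVisSet G X ∧ X.ncard = n}

/-- The total mutual-visibility number `μₜ(G)`. -/
noncomputable def totalMutualVisNum {V : Type*} (G : SimpleGraph V) : ℕ :=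
  sSup {n | ∃ X : Set V, TotalMutualVisSet G X ∧ X.ncard = n}

/-- A set of vertices is convex: every shortest path in `G` between two of its
vertices has all its vertices in the set. -/
def ConvexSet {V : Type*} (G : SimpleGraph V) (S : Set V) : Prop :=
  ∀ x ∈ S, ∀ y ∈ S, ∀ p : G.Walk x y, p.IsPath → p.length = G.dist x y →
    ∀ z ∈ p.support, z ∈ S

/-- The butterfly graph `BF(d)`: vertices `[ℓ, c]` with level `ℓ : Fin (d+1)`
and column `c : Fin d → Bool`; `[ℓ,c]` and `[ℓ+1,c']` are adjacent iff `c` and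
`c'` agree on every bit other than bit `ℓ` (so `c = c'` or they differ exactly
in bit `ℓ`). -/
def BF (d : ℕ) : SimpleGraph (Fin (d + 1) × (Fin d → Bool)) :=
  SimpleGraph.fromRel (fun u v =>
    (u.1 : ℕ) + 1 = (v.1 : ℕ) ∧ ∀ i : Fin d, (i : ℕ) ≠ (u.1 : ℕ) → u.2 i = v.2 i)

namespace BFAux

variable {d : ℕ}

lemma bf_adj_cases {u v : Fin (d+1) × (Fin d → Bool)} (h : (BF d).Adj u v) :
    ((u.1 : ℕ) + 1 = (v.1 : ℕ) ∧ ∀ i : Fin d, (i : ℕ) ≠ (u.1 : ℕ) → u.2 i = v.2 i) ∨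
    ((v.1 : ℕ) + 1 = (u.1 : ℕ) ∧ ∀ i : Fin d, (i : ℕ) ≠ (v.1 : ℕ) → v.2 i = u.2 i) := by
  rw [BF, fromRel_adj] at h
  exact h.2

lemma bf_adj_mk {n : ℕ} (hn : n < d) (c c' : Fin d → Bool)
    (hcc : ∀ i : Fin d, (i : ℕ) ≠ n → c i = c' i) :
    (BF d).Adj (⟨n, by omega⟩, c) (⟨n+1, by omega⟩, c') := by
  rw [BF, fromRel_adj]
  refine ⟨fun h => ?_, Or.inl ⟨rfl, hcc⟩⟩
  have := congrArg (fun x => (x.1 : ℕ)) h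
  simp at this

lemma level_le {u v : Fin (d+1) × (Fin d → Bool)} (p : (BF d).Walk u v) :
    (u.1 : ℕ) ≤ (v.1 : ℕ) + p.length ∧ (v.1 : ℕ) ≤ (u.1 : ℕ) + p.length := by
  induction p with
  | nil => simp
  | cons h q ih =>
    rcases bf_adj_cases h with ⟨h1, _⟩ | ⟨h1, _⟩ <;>
      simp only [SimpleGraph.Walk.length_cons] <;> omega

lemma bit_up {u v : Fin (d+1) × (Fin d → Bool)} (p : (BF d).Walk u v) (k : Fin d)
    (hk : u.2 k ≠ v.2 k) : ∃ z ∈ p.support, (k : ℕ) + 1 ≤ (z.1 : ℕ) := by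
  induction p with
  | nil => exact absurd rfl hk
  | @cons u w v h q ih =>
    by_cases hb : w.2 k = v.2 k
    · have huw : u.2 k ≠ w.2 k := by rw [hb]; exact hk
      rcases bf_adj_cases h with ⟨h1, h2⟩ | ⟨h1, h2⟩
      · have : (k : ℕ) = (u.1 : ℕ) := by
          by_contra hne; exact huw (h2 k hne)
        exact ⟨w, by simp, by omega⟩
      · have : (k : ℕ) = (w.1 : ℕ) := by
          by_contra hne; exact huw ((h2 k hne).symm)
        exact ⟨u, by simp, by omega⟩
    · obtain ⟨z, hz, hz2⟩ := ih hb
      exact ⟨z, by simp [hz], hz2⟩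

lemma bit_down {u v : Fin (d+1) × (Fin d → Bool)} (p : (BF d).Walk u v) (k : Fin d)
    (hk : u.2 k ≠ v.2 k) : ∃ z ∈ p.support, (z.1 : ℕ) ≤ (k : ℕ) := by
  induction p with
  | nil => exact absurd rfl hk
  | @cons u w v h q ih =>
    by_cases hb : w.2 k = v.2 k
    · have huw : u.2 k ≠ w.2 k := by rw [hb]; exact hk
      rcases bf_adj_cases h with ⟨h1, h2⟩ | ⟨h1, h2⟩
      · have : (k : ℕ) = (u.1 : ℕ) := by
          by_contra hne; exact huw (h2 k hne)
        exact ⟨u, by simp, by omega⟩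
      · have : (k : ℕ) = (w.1 : ℕ) := by
          by_contra hne; exact huw ((h2 k hne).symm)
        exact ⟨w, by simp, by omega⟩
    · obtain ⟨z, hz, hz2⟩ := ih hb
      exact ⟨z, by simp [hz], hz2⟩

/-- Column obtained from `c` by overwriting bits in `[a, n)` with `t`. -/
def colSeg (c t : Fin d → Bool) (a n : ℕ) : Fin d → Bool :=
  fun i => if a ≤ (i : ℕ) ∧ (i : ℕ) < n then t i else c i

lemma colSeg_self (c t : Fin d → Bool) (a : ℕ) : colSeg c t a a = c := by
  funext i; simp only [colSeg]; rw [if_neg]; omega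

/-- Ascending walk from level `a` to level `n`, rewriting bits `[a, n)` to `t`. -/
def upWalkFrom (c t : Fin d → Bool) (a : ℕ) :
    (n : ℕ) → (han : a ≤ n) → (hnd : n ≤ d) →
    { p : (BF d).Walk (⟨a, by omega⟩, c) (⟨n, by omega⟩, colSeg c t a n) //
      p.length = n - a ∧ ∀ z ∈ p.support,
        a ≤ (z.1 : ℕ) ∧ (z.1 : ℕ) ≤ n ∧ z.2 = colSeg c t a (z.1 : ℕ) }
  | 0, han, hnd => by
      have ha : a = 0 := by omega
      subst ha
      refine ⟨SimpleGraph.Walk.nil.copy rfl (by rw [colSeg_self]),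
        (SimpleGraph.Walk.length_copy _ _ _).trans rfl, ?_⟩
      intro z hz
      replace hz := (congrArg (fun l : List (Fin (d+1) × (Fin d → Bool)) => z ∈ l) (SimpleGraph.Walk.support_copy _ _ _)).mp hz
      simp at hz
      subst hz
      simp [colSeg_self]
  | (n+1), han, hnd => by
      by_cases h : a = n + 1
      · subst h
        refine ⟨SimpleGraph.Walk.nil.copy rfl (by rw [colSeg_self]), by simp, ?_⟩
        intro z hz
        simp [SimpleGraph.Walk.support_copy] at hz
        subst hz
        simp [colSeg_self]
      · have han' : a ≤ n := by omega
        obtain ⟨p, hlen, hsup⟩ := upWalkFrom c t a n han' (by omega)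
        have hadj : (BF d).Adj (⟨n, by omega⟩, colSeg c t a n)
            (⟨n+1, by omega⟩, colSeg c t a (n+1)) := by
          apply bf_adj_mk (by omega)
          intro i hi
          simp only [colSeg]
          by_cases h1 : a ≤ (i:ℕ) ∧ (i:ℕ) < n
          · rw [if_pos h1, if_pos ⟨h1.1, by omega⟩]
          · rw [if_neg h1, if_neg (by omega)]
        refine ⟨p.concat hadj, ?_, ?_⟩
        · rw [SimpleGraph.Walk.length_concat, hlen]; omega
        · intro z hz
          rw [SimpleGraph.Walk.support_concat,
            List.mem_append] at hz
          rcases hz with hz | hz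
          · obtain ⟨h1, h2, h3⟩ := hsup z hz
            exact ⟨h1, by omega, h3⟩
          · simp at hz
            subst hz
            exact ⟨by simp; omega, by simp, by simp⟩

/-- If some walk realizes a length which is also a lower bound for all walks,
that length is the distance. -/
lemma dist_eq_of {V : Type*} {G : SimpleGraph V} {x y : V} (p : G.Walk x y) (L : ℕ)
    (hlen : p.length = L) (hlow : ∀ q : G.Walk x y, L ≤ q.length) :
    G.dist x y = L := by
  refine le_antisymm (hlen ▸ SimpleGraph.dist_le p) ?_
  obtain ⟨q, -, hq⟩ := SimpleGraph.Reachable.exists_path_of_dist ⟨p⟩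
  rw [← hq]
  exact hlow q

lemma vis_of_walk {V : Type*} [DecidableEq V] {G : SimpleGraph V} {X : Set V} {x y : V}
    (p : G.Walk x y) (hdist : G.dist x y = p.length)
    (hsup : ∀ z ∈ p.support, z ∈ X → z = x ∨ z = y) :
    IsVisiblePair G X x y := by
  refine ⟨p.bypass, p.bypass_isPath, le_antisymm ?_ ?_, fun z hz hzX =>
    hsup z (p.support_bypass_subset hz) hzX⟩
  · exact le_trans p.length_bypass_le (le_of_eq hdist.symm)
  · exact SimpleGraph.dist_le _

lemma split_len {V : Type*} [DecidableEq V] {G : SimpleGraph V} {x y z : V} (q : G.Walk x y)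
    (hz : z ∈ q.support) :
    q.length = (q.takeUntil z hz).length + (q.dropUntil z hz).length := by
  conv_lhs => rw [← q.take_spec hz]
  rw [SimpleGraph.Walk.length_append]

def S (d : ℕ) : Set (Fin (d + 1) × (Fin d → Bool)) :=
  {u : Fin (d + 1) × (Fin d → Bool) | u.1 = 0 ∨ u.1 = Fin.last d} \
    {(0, fun _ => true), (Fin.last d, fun _ => true)}
lemma mem_S {z : Fin (d+1) × (Fin d → Bool)} (hz : z ∈ S d) :
    (z.1 = 0 ∨ z.1 = Fin.last d) ∧ z ≠ (0, fun _ => true) ∧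
      z ≠ (Fin.last d, fun _ => true) := by
  obtain ⟨h1, h2⟩ := hz
  simp only [Set.mem_insert_iff, Set.mem_singleton_iff, not_or] at h2
  exact ⟨h1, h2⟩
lemma fin_zero_eq : ((0 : Fin (d+1)) : ℕ) = 0 := rfl

lemma vis_zero (c c' : Fin d → Bool) :
    IsVisiblePair (BF d) (S d) ((0 : Fin (d+1)), c) ((0 : Fin (d+1)), c') := by
  classical
  by_cases hcc : c = c'
  · subst hcc
    refine ⟨SimpleGraph.Walk.nil, SimpleGraph.Walk.IsPath.nil,
      by rw [SimpleGraph.Walk.length_nil, SimpleGraph.dist_self], ?_⟩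
    intro z hz _
    simp at hz
    exact Or.inl hz
  have hne : (Finset.univ.filter (fun i => c i ≠ c' i)).Nonempty := by
    obtain ⟨i, hi⟩ := Function.ne_iff.mp hcc
    exact ⟨i, by simp [hi]⟩
  set k := (Finset.univ.filter (fun i => c i ≠ c' i)).max' hne with hk
  have hkmem : c k ≠ c' k := by
    have := Finset.max'_mem _ hne
    rw [← hk] at this
    simpa using this
  have hkmax : ∀ i : Fin d, (k : ℕ) < (i : ℕ) → c i = c' i := by
    intro i hi
    by_contra hcon
    have : i ≤ k := Finset.le_max' _ i (by simp [hcon])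
    omega
  have hkd : (k : ℕ) < d := k.isLt
  obtain ⟨p1, hlen1, hsup1⟩ :=
    upWalkFrom c (fun _ => true) 0 ((k : ℕ) + 1) (by omega) (by omega)
  obtain ⟨p2, hlen2, hsup2⟩ :=
    upWalkFrom c' (fun _ => true) 0 ((k : ℕ) + 1) (by omega) (by omega)
  have hcol : colSeg c' (fun _ => true) 0 ((k : ℕ) + 1) =
      colSeg c (fun _ => true) 0 ((k : ℕ) + 1) := by
    funext i
    simp only [colSeg]
    by_cases h1 : (i : ℕ) < (k : ℕ) + 1
    · rw [if_pos ⟨Nat.zero_le _, h1⟩, if_pos ⟨Nat.zero_le _, h1⟩]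
    · rw [if_neg (by omega), if_neg (by omega)]
      exact (hkmax i (by omega)).symm
  have hcolp : ((⟨(k:ℕ)+1, by omega⟩ : Fin (d+1)), colSeg c' (fun _ => true) 0 ((k:ℕ)+1))
      = ((⟨(k:ℕ)+1, by omega⟩ : Fin (d+1)), colSeg c (fun _ => true) 0 ((k:ℕ)+1)) :=
    Prod.ext rfl hcol
  obtain ⟨p, hplen, hpsupp⟩ : ∃ p : (BF d).Walk ((0 : Fin (d+1)), c) ((0 : Fin (d+1)), c'),
      p.length = 2 * (k : ℕ) + 2 ∧
      ∀ z ∈ p.support, z ∈ p1.support ∨ z ∈ p2.support := by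
    refine ⟨(p1.append ((p2.copy rfl hcolp).reverse)).copy rfl rfl, ?_, ?_⟩
    · refine (SimpleGraph.Walk.length_copy _ _ _).trans ?_
      simp only [SimpleGraph.Walk.length_copy, SimpleGraph.Walk.length_append,
        SimpleGraph.Walk.length_reverse]
      rw [hlen1, hlen2]
      omega
    · intro z hz
      replace hz := (congrArg (fun l : List (Fin (d+1) × (Fin d → Bool)) => z ∈ l) (SimpleGraph.Walk.support_copy _ _ _)).mp hz
      rw [SimpleGraph.Walk.support_append] at hz
      rcases List.mem_append.mp hz with h | h
      · exact Or.inl h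
      · right
        have := List.mem_of_mem_tail h
        rw [SimpleGraph.Walk.support_reverse, List.mem_reverse,
          SimpleGraph.Walk.support_copy] at this
        exact this
  have hdist : (BF d).dist ((0 : Fin (d+1)), c) ((0 : Fin (d+1)), c') = p.length := by
    rw [hplen]
    apply dist_eq_of p _ hplen
    intro q
    obtain ⟨z, hz, hz2⟩ := bit_up q k hkmem
    have hsplit := split_len q hz
    have ht := (level_le (q.takeUntil z hz)).2
    have hdr := (level_le (q.dropUntil z hz)).1
    simp only [fin_zero_eq] at ht hdr
    omega
  apply vis_of_walk p hdist
  intro z hz hzS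
  have hform : (z.1 : ℕ) ≤ (k : ℕ) + 1 ∧
      (z.2 = colSeg c (fun _ => true) 0 (z.1 : ℕ) ∨
       z.2 = colSeg c' (fun _ => true) 0 (z.1 : ℕ)) := by
    rcases hpsupp z hz with h | h
    · obtain ⟨_, h2, h3⟩ := hsup1 z h; exact ⟨h2, Or.inl h3⟩
    · obtain ⟨_, h2, h3⟩ := hsup2 z h; exact ⟨h2, Or.inr h3⟩
  obtain ⟨hzk, hzcol⟩ := hform
  obtain ⟨hlev, hex1, hex2⟩ := mem_S hzS
  rcases hlev with hl | hl
  · have hz0 : (z.1 : ℕ) = 0 := by rw [hl]; rfl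
    rcases hzcol with h | h
    · left; exact Prod.ext hl (by rw [h, hz0, colSeg_self])
    · right; exact Prod.ext hl (by rw [h, hz0, colSeg_self])
  · exfalso
    have hzd : (z.1 : ℕ) = d := by rw [hl]; exact Fin.val_last d
    have hones : z.2 = fun _ => true := by
      rcases hzcol with h | h <;>
      · rw [h, hzd]
        funext i
        exact if_pos ⟨Nat.zero_le _, i.isLt⟩
    exact hex2 (Prod.ext hl hones)


lemma vis_last (c c' : Fin d → Bool) :
    IsVisiblePair (BF d) (S d) ((Fin.last d), c) ((Fin.last d), c') := by
  classical
  by_cases hcc : c = c'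
  · subst hcc
    refine ⟨SimpleGraph.Walk.nil, SimpleGraph.Walk.IsPath.nil,
      by rw [SimpleGraph.Walk.length_nil, SimpleGraph.dist_self], ?_⟩
    intro z hz _
    simp at hz
    exact Or.inl hz
  have hne : (Finset.univ.filter (fun i => c i ≠ c' i)).Nonempty := by
    obtain ⟨i, hi⟩ := Function.ne_iff.mp hcc
    exact ⟨i, by simp [hi]⟩
  set k := (Finset.univ.filter (fun i => c i ≠ c' i)).min' hne with hk
  have hkmem : c k ≠ c' k := by
    have := Finset.min'_mem _ hne
    rw [← hk] at this
    simpa using this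
  have hkmin : ∀ i : Fin d, (i : ℕ) < (k : ℕ) → c i = c' i := by
    intro i hi
    by_contra hcon
    have : k ≤ i := Finset.min'_le _ i (by simp [hcon])
    omega
  have hkd : (k : ℕ) < d := k.isLt
  set m : Fin d → Bool := colSeg c (fun _ => true) (k : ℕ) d with hm
  have hmlt : ∀ i : Fin d, (i : ℕ) < (k : ℕ) → m i = c i := by
    intro i hi
    rw [hm]
    simp only [colSeg]
    rw [if_neg (by omega)]
  obtain ⟨p1, hlen1, hsup1⟩ := upWalkFrom m c (k : ℕ) d (by omega) le_rfl
  obtain ⟨p2, hlen2, hsup2⟩ := upWalkFrom m c' (k : ℕ) d (by omega) le_rfl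
  have hc1 : colSeg m c (k : ℕ) d = c := by
    funext i
    simp only [colSeg]
    by_cases h1 : (k : ℕ) ≤ (i : ℕ)
    · rw [if_pos ⟨h1, i.isLt⟩]
    · rw [if_neg (by omega)]
      exact hmlt i (by omega)
  have hc2 : colSeg m c' (k : ℕ) d = c' := by
    funext i
    simp only [colSeg]
    by_cases h1 : (k : ℕ) ≤ (i : ℕ)
    · rw [if_pos ⟨h1, i.isLt⟩]
    · rw [if_neg (by omega), hmlt i (by omega)]
      exact hkmin i (by omega)
  have e1 : ((⟨d, by omega⟩ : Fin (d+1)), colSeg m c (k:ℕ) d) = (Fin.last d, c) :=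
    Prod.ext rfl hc1
  have e2 : ((⟨d, by omega⟩ : Fin (d+1)), colSeg m c' (k:ℕ) d) = (Fin.last d, c') :=
    Prod.ext rfl hc2
  obtain ⟨p, hplen, hpsupp⟩ : ∃ p : (BF d).Walk (Fin.last d, c) (Fin.last d, c'),
      p.length = 2 * (d - (k : ℕ)) ∧
      ∀ z ∈ p.support, z ∈ p1.support ∨ z ∈ p2.support := by
    refine ⟨(p1.copy rfl e1).reverse.append (p2.copy rfl e2), ?_, ?_⟩
    · simp only [SimpleGraph.Walk.length_append, SimpleGraph.Walk.length_reverse,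
        SimpleGraph.Walk.length_copy]
      rw [hlen1, hlen2]
      omega
    · intro z hz
      rw [SimpleGraph.Walk.support_append] at hz
      rcases List.mem_append.mp hz with h | h
      · left
        rw [SimpleGraph.Walk.support_reverse, List.mem_reverse,
          SimpleGraph.Walk.support_copy] at h
        exact h
      · right
        have := List.mem_of_mem_tail h
        rw [SimpleGraph.Walk.support_copy] at this
        exact this
  have hdist : (BF d).dist (Fin.last d, c) (Fin.last d, c') = p.length := by
    rw [hplen]
    apply dist_eq_of p _ hplen
    intro q
    obtain ⟨z, hz, hz2⟩ := bit_down q k hkmem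
    have hsplit := split_len q hz
    have ht := (level_le (q.takeUntil z hz)).1
    have hdr := (level_le (q.dropUntil z hz)).2
    simp only [Fin.val_last] at ht hdr
    omega
  apply vis_of_walk p hdist
  intro z hz hzS
  have hform : (k : ℕ) ≤ (z.1 : ℕ) ∧
      (z.2 = colSeg m c (k : ℕ) (z.1 : ℕ) ∨ z.2 = colSeg m c' (k : ℕ) (z.1 : ℕ)) := by
    rcases hpsupp z hz with h | h
    · obtain ⟨h1, _, h3⟩ := hsup1 z h; exact ⟨h1, Or.inl h3⟩
    · obtain ⟨h1, _, h3⟩ := hsup2 z h; exact ⟨h1, Or.inr h3⟩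
  obtain ⟨hzk, hzcol⟩ := hform
  obtain ⟨hlev, hex1, hex2⟩ := mem_S hzS
  rcases hlev with hl | hl
  · exfalso
    have hz0 : (z.1 : ℕ) = 0 := by rw [hl]; rfl
    have hk0 : (k : ℕ) = 0 := by omega
    have hones : z.2 = fun _ => true := by
      have hm1 : m = fun _ => true := by
        funext i
        rw [hm]
        simp only [colSeg]
        rw [if_pos ⟨by omega, i.isLt⟩]
      rcases hzcol with h | h <;>
      · rw [h, hz0, hk0, colSeg_self, hm1]
    exact hex1 (Prod.ext hl hones)
  · have hzd : (z.1 : ℕ) = d := by rw [hl]; exact Fin.val_last d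
    rcases hzcol with h | h
    · left; exact Prod.ext hl (by rw [h, hzd, hc1])
    · right; exact Prod.ext hl (by rw [h, hzd, hc2])

lemma vis_symm {V : Type*} {G : SimpleGraph V} {X : Set V} {x y : V}
    (h : IsVisiblePair G X x y) : IsVisiblePair G X y x := by
  obtain ⟨p, hp, hlen, hsup⟩ := h
  refine ⟨p.reverse, hp.reverse, ?_, ?_⟩
  · rw [SimpleGraph.Walk.length_reverse, hlen, SimpleGraph.dist_comm]
  · intro z hz hzX
    rw [SimpleGraph.Walk.support_reverse, List.mem_reverse] at hz
    exact (hsup z hz hzX).symm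

lemma vis_cross (c c' : Fin d → Bool) :
    IsVisiblePair (BF d) (S d) ((0 : Fin (d+1)), c) (Fin.last d, c') := by
  classical
  obtain ⟨p0, hlen, hsup⟩ := upWalkFrom c c' 0 d (Nat.zero_le d) le_rfl
  have hcol : colSeg c c' 0 d = c' := by
    funext i; exact if_pos ⟨Nat.zero_le _, i.isLt⟩
  have hd : ((⟨d, by omega⟩ : Fin (d+1)), colSeg c c' 0 d) = (Fin.last d, c') :=
    Prod.ext rfl hcol
  obtain ⟨p, hplen, hpsupp⟩ : ∃ p : (BF d).Walk ((0 : Fin (d+1)), c) (Fin.last d, c'),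
      p.length = d ∧ ∀ z ∈ p.support, z ∈ p0.support := by
    refine ⟨p0.copy rfl hd, ?_, ?_⟩
    · refine (SimpleGraph.Walk.length_copy _ _ _).trans ?_; rw [hlen]; omega
    · intro z hz
      exact (congrArg (fun l : List (Fin (d+1) × (Fin d → Bool)) => z ∈ l) (SimpleGraph.Walk.support_copy _ _ _)).mp hz
  have hdist : (BF d).dist ((0 : Fin (d+1)), c) (Fin.last d, c') = p.length := by
    rw [hplen]
    apply dist_eq_of p d hplen
    intro q
    have := (level_le q).2
    simp only [fin_zero_eq, Fin.val_last] at this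
    omega
  apply vis_of_walk p hdist
  intro z hz hzS
  obtain ⟨h1, h2, h3⟩ := hsup z (hpsupp z hz)
  rcases (mem_S hzS).1 with hl | hl
  · left
    have hz0 : (z.1 : ℕ) = 0 := by rw [hl]; rfl
    exact Prod.ext hl (by rw [h3, hz0, colSeg_self])
  · right
    have hzd : (z.1 : ℕ) = d := by rw [hl]; exact Fin.val_last d
    exact Prod.ext hl (by rw [h3, hzd, hcol])

lemma card_level (a : Fin (d+1)) :
    ({u : Fin (d+1) × (Fin d → Bool) | u.1 = a}).ncard = 2 ^ d := by
  classical
  have himg : {u : Fin (d+1) × (Fin d → Bool) | u.1 = a} =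
      (fun c => (a, c)) '' Set.univ := by
    ext ⟨u1, u2⟩
    simp only [Set.mem_setOf_eq, Set.image_univ, Set.mem_range, Prod.mk.injEq]
    constructor
    · rintro rfl; exact ⟨u2, rfl, rfl⟩
    · rintro ⟨b, rfl, rfl⟩; rfl
  rw [himg, Set.ncard_image_of_injective _ (fun b b' h => (Prod.mk.injEq _ _ _ _).mp h |>.2),
    Set.ncard_univ, Nat.card_eq_fintype_card]
  simp


end BFAux

open BFAux in
/-- In `BF(d)`, the set of all vertices at levels `0` and `d`, minus the two
vertices of the all-ones column at those levels, is a mutual-visibility set of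
size `2^{d+1} - 2`. -/
theorem bf_mutualVisSet (d : ℕ) (hd : 1 ≤ d) :
    MutualVisSet (BF d)
      ({u : Fin (d + 1) × (Fin d → Bool) | u.1 = 0 ∨ u.1 = Fin.last d} \
        {(0, fun _ => true), (Fin.last d, fun _ => true)}) ∧
    ({u : Fin (d + 1) × (Fin d → Bool) | u.1 = 0 ∨ u.1 = Fin.last d} \
        {(0, fun _ => true), (Fin.last d, fun _ => true)}).ncard = 2 ^ (d + 1) - 2 := by
  classical
  have h0last : (0 : Fin (d+1)) ≠ Fin.last d := by
    intro h
    have := congrArg (fun x : Fin (d+1) => (x : ℕ)) h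
    simp only [fin_zero_eq, Fin.val_last] at this
    omega
  constructor
  · intro x hx y hy
    have hxS : x ∈ S d := hx
    have hyS : y ∈ S d := hy
    obtain ⟨hx1, -, -⟩ := mem_S hxS
    obtain ⟨hy1, -, -⟩ := mem_S hyS
    rcases hx1 with hx1 | hx1 <;> rcases hy1 with hy1 | hy1
    · have ex : x = ((0 : Fin (d+1)), x.2) := Prod.ext hx1 rfl
      have ey : y = ((0 : Fin (d+1)), y.2) := Prod.ext hy1 rfl
      rw [ex, ey]; exact vis_zero x.2 y.2
    · have ex : x = ((0 : Fin (d+1)), x.2) := Prod.ext hx1 rfl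
      have ey : y = (Fin.last d, y.2) := Prod.ext hy1 rfl
      rw [ex, ey]; exact vis_cross x.2 y.2
    · have ex : x = (Fin.last d, x.2) := Prod.ext hx1 rfl
      have ey : y = ((0 : Fin (d+1)), y.2) := Prod.ext hy1 rfl
      rw [ex, ey]; exact vis_symm (vis_cross y.2 x.2)
    · have ex : x = (Fin.last d, x.2) := Prod.ext hx1 rfl
      have ey : y = (Fin.last d, y.2) := Prod.ext hy1 rfl
      rw [ex, ey]; exact vis_last x.2 y.2
  · set A : Set (Fin (d+1) × (Fin d → Bool)) :=
      {u | u.1 = 0 ∨ u.1 = Fin.last d} with hA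
    set B : Set (Fin (d+1) × (Fin d → Bool)) :=
      {(0, fun _ => true), (Fin.last d, fun _ => true)} with hB
    have hBA : B ⊆ A := by
      rintro u (rfl | rfl)
      · exact Or.inl rfl
      · exact Or.inr rfl
    have hAfin : A.Finite := Set.toFinite A
    have hBcard : B.ncard = 2 := by
      rw [hB, Set.ncard_pair]
      intro h
      exact h0last (congrArg Prod.fst h)
    have hAcard : A.ncard = 2 ^ d + 2 ^ d := by
      have hsplit : A = {u : Fin (d+1) × (Fin d → Bool) | u.1 = 0} ∪
          {u : Fin (d+1) × (Fin d → Bool) | u.1 = Fin.last d} := by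
        ext u; simp [hA, Set.mem_union]
      rw [hsplit, Set.ncard_union_eq ?_ (Set.toFinite _) (Set.toFinite _),
        card_level, card_level]
      rw [Set.disjoint_left]
      rintro u hu hu'
      exact h0last (hu ▸ hu')
    have hdiff : (A \ B).ncard = A.ncard - B.ncard :=
      Set.ncard_diff hBA (Set.toFinite B)
    rw [hdiff, hAcard, hBcard]
    have : 2 ^ (d + 1) = 2 ^ d + 2 ^ d := by rw [pow_succ]; ring
    omega
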